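/- For a convex body K in R^n with 0 ∈ K, ∫_{R^n} e^{-h_K(x)} dx = n! |K°|, where h_K(x) = max_{y ∈ K} ⟨x, y⟩ is the support function and K° = {x : ⟨x, y⟩ ≤ 1 for all y ∈ K} is the polar body. -/

import Mathlib

open MeasureTheory Set Pointwise
open scoped RealInnerProductSpace

theorem integral_exp_support_function (n : ℕ) (hn : 0 < n)
    (K : Set (EuclideanSpace ℝ (Fin n)))
    (hKc : IsCompact K) (hKconv : Convex ℝ K)
    (h0 : (0 : EuclideanSpace ℝ (Fin n)) ∈ interior K) :
    (∫ x, Real.exp (-(⨆ y ∈ K, ⟪x, y⟫))) =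
      (n.factorial : ℝ) * (volume {x : EuclideanSpace ℝ (Fin n) |
        ∀ y ∈ K, ⟪x, y⟫ ≤ 1}).toReal := by
  have hK0 : (0 : (EuclideanSpace ℝ (Fin n))) ∈ K := interior_subset h0
  have hne : K.Nonempty := ⟨0, hK0⟩
  set g : (EuclideanSpace ℝ (Fin n)) → ℝ := fun x => ⨆ y ∈ K, ⟪x, y⟫ with hg
  have hcont : ∀ x : (EuclideanSpace ℝ (Fin n)), Continuous fun y : (EuclideanSpace ℝ (Fin n)) => ⟪x, y⟫ := fun x =>
    continuous_const.inner continuous_id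
  have himg : ∀ x : (EuclideanSpace ℝ (Fin n)), IsCompact ((fun y => ⟪x, y⟫) '' K) := fun x =>
    hKc.image (hcont x)
  have hbdd : ∀ x : (EuclideanSpace ℝ (Fin n)), BddAbove ((fun y => ⟪x, y⟫) '' K) := fun x => (himg x).bddAbove
  -- g x is the greatest element of the image
  have hG : ∀ x : (EuclideanSpace ℝ (Fin n)), IsGreatest ((fun y => ⟪x, y⟫) '' K) (g x) := by
    intro x
    have h1 : IsGreatest ((fun y => ⟪x, y⟫) '' K) (sSup ((fun y => ⟪x, y⟫) '' K)) :=
      (himg x).isGreatest_sSup (hne.image _)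
    have hbr : BddAbove (Set.range fun i : K => ⟪x, (i : (EuclideanSpace ℝ (Fin n)))⟫) := by
      rw [← Set.image_eq_range]; exact hbdd x
    have h2 : sSup ((fun y => ⟪x, y⟫) '' K) = g x := by
      refine csSup_image hbr ?_
      rw [Real.sSup_empty]
      refine le_ciSup_of_le hbr ⟨0, hK0⟩ ?_
      simp
    rwa [h2] at h1
  have hub : ∀ x : (EuclideanSpace ℝ (Fin n)), ∀ y ∈ K, ⟪x, y⟫ ≤ g x := fun x y hy => (hG x).2 ⟨y, hy, rfl⟩
  have hmem : ∀ x : (EuclideanSpace ℝ (Fin n)), ∃ y ∈ K, ⟪x, y⟫ = g x := fun x => (hG x).1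
  have hg0 : ∀ x : (EuclideanSpace ℝ (Fin n)), 0 ≤ g x := by
    intro x
    have := hub x 0 hK0
    simpa using this
  -- continuity of g
  obtain ⟨R, hR⟩ : ∃ R, ∀ y ∈ K, ‖y‖ ≤ R := hKc.isBounded.exists_norm_le
  have hgc : Continuous g := by
    have : LipschitzWith (Real.toNNReal R) g := by
      refine LipschitzWith.of_dist_le_mul fun x z => ?_
      have key : ∀ x z : (EuclideanSpace ℝ (Fin n)), g x - g z ≤ R * dist x z := by
        intro x z
        obtain ⟨y₀, hy₀K, hy₀⟩ := hmem x
        have h1 : ⟪x, y₀⟫ = ⟪z, y₀⟫ + ⟪x - z, y₀⟫ := by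
          rw [inner_sub_left]; ring
        have h2 : ⟪x - z, y₀⟫ ≤ ‖x - z‖ * ‖y₀‖ := real_inner_le_norm _ _
        have h3 : ‖x - z‖ * ‖y₀‖ ≤ ‖x - z‖ * R :=
          mul_le_mul_of_nonneg_left (hR y₀ hy₀K) (norm_nonneg _)
        have h4 : ⟪z, y₀⟫ ≤ g z := hub z y₀ hy₀K
        rw [dist_eq_norm]
        nlinarith
      rw [Real.dist_eq, abs_sub_le_iff]
      have hRle : R ≤ (Real.toNNReal R : ℝ) := Real.le_coe_toNNReal R
      have hd : (0:ℝ) ≤ dist x z := dist_nonneg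
      constructor
      · calc g x - g z ≤ R * dist x z := key x z
          _ ≤ (Real.toNNReal R : ℝ) * dist x z := mul_le_mul_of_nonneg_right hRle hd
      · calc g z - g x ≤ R * dist z x := key z x
          _ = R * dist x z := by rw [dist_comm]
          _ ≤ (Real.toNNReal R : ℝ) * dist x z := mul_le_mul_of_nonneg_right hRle hd
    exact this.continuous
  -- homogeneity
  have hhom : ∀ (c : ℝ), 0 < c → ∀ x : (EuclideanSpace ℝ (Fin n)), g (c • x) = c * g x := by
    intro c hc x
    refine ((hG (c • x)).unique ?_)
    constructor
    · obtain ⟨y₀, hy₀K, hy₀⟩ := hmem x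
      refine ⟨y₀, hy₀K, ?_⟩
      show ⟪c • x, y₀⟫ = c * g x
      rw [real_inner_smul_left, hy₀]
    · rintro r ⟨y, hyK, rfl⟩
      show ⟪c • x, y⟫ ≤ c * g x
      rw [real_inner_smul_left]
      exact mul_le_mul_of_nonneg_left (hub x y hyK) hc.le
  -- the polar body
  set P : Set (EuclideanSpace ℝ (Fin n)) := {x : (EuclideanSpace ℝ (Fin n)) | ∀ y ∈ K, ⟪x, y⟫ ≤ 1} with hPdef
  have hPg : P = {x : (EuclideanSpace ℝ (Fin n)) | g x ≤ 1} := by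
    ext x
    constructor
    · intro hx
      obtain ⟨y₀, hy₀K, hy₀⟩ := hmem x
      show g x ≤ 1
      rw [← hy₀]
      exact hx y₀ hy₀K
    · intro hx y hy
      exact (hub x y hy).trans hx
  have hPconv : Convex ℝ P := by
    have : P = ⋂ y ∈ K, {x : (EuclideanSpace ℝ (Fin n)) | ⟪x, y⟫ ≤ 1} := by
      ext x; simp [hPdef]
    rw [this]
    refine convex_iInter₂ fun y hy => ?_
    have hlin : IsLinearMap ℝ fun x : (EuclideanSpace ℝ (Fin n)) => ⟪x, y⟫ :=
      ⟨fun a b => inner_add_left _ _ _, fun c a => real_inner_smul_left _ _ _⟩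
    exact convex_halfSpace_le hlin 1
  have hPfin : volume P ≠ ⊤ := by
    obtain ⟨ε, hε, hball⟩ := Metric.mem_nhds_iff.mp (mem_interior_iff_mem_nhds.mp h0)
    have hsub : P ⊆ Metric.closedBall 0 (2 / ε) := by
      intro x hx
      rw [Metric.mem_closedBall, dist_zero_right]
      rcases eq_or_ne x 0 with rfl | hx0
      · simp only [norm_zero]; positivity
      · have hxn : (0:ℝ) < ‖x‖ := norm_pos_iff.mpr hx0
        set y : (EuclideanSpace ℝ (Fin n)) := (ε / 2) • ‖x‖⁻¹ • x with hy
        have hyK : y ∈ K := by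
          apply hball
          have hny : ‖y‖ = ε / 2 := by
            rw [hy, norm_smul, norm_smul, norm_inv, norm_norm, inv_mul_cancel₀ hxn.ne',
              mul_one, Real.norm_eq_abs, abs_div, abs_of_pos hε, abs_two]
          rw [Metric.mem_ball, dist_zero_right, hny]
          linarith
        have h1 := hx y hyK
        rw [hy, real_inner_smul_right, real_inner_smul_right, real_inner_self_eq_norm_sq] at h1
        have h2 : ε / 2 * (‖x‖⁻¹ * ‖x‖ ^ 2) = ε / 2 * ‖x‖ := by
          field_simp
        rw [h2] at h1
        calc ‖x‖ = (ε / 2 * ‖x‖) * (2 / ε) := by field_simp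
          _ ≤ 1 * (2 / ε) := mul_le_mul_of_nonneg_right h1 (by positivity)
          _ = 2 / ε := one_mul _
    exact ne_top_of_le_ne_top (IsCompact.measure_lt_top (isCompact_closedBall 0 (2/ε))).ne
      (measure_mono hsub)
  -- sublevel sets
  have hsub_eq : ∀ t : ℝ, 0 < t → {x : (EuclideanSpace ℝ (Fin n)) | g x ≤ t} = t • P := by
    intro t ht
    ext x
    rw [mem_smul_set_iff_inv_smul_mem₀ ht.ne', hPg]
    simp only [mem_setOf_eq]
    rw [hhom t⁻¹ (by positivity) x]
    rw [inv_mul_le_iff₀ ht, mul_one]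
  have hfr : ∀ t : ℝ, 0 < t → volume {x : (EuclideanSpace ℝ (Fin n)) | g x = t} = 0 := by
    intro t ht
    have hcl : IsClosed {x : (EuclideanSpace ℝ (Fin n)) | g x ≤ t} := isClosed_le hgc continuous_const
    have hsubfr : {x : (EuclideanSpace ℝ (Fin n)) | g x = t} ⊆ frontier {x : (EuclideanSpace ℝ (Fin n)) | g x ≤ t} := by
      intro x hx
      rw [hcl.frontier_eq]
      refine ⟨le_of_eq hx, fun hint => ?_⟩
      have hc : Filter.Tendsto (fun s : ℝ => s • x) (nhds 1) (nhds x) := by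
        have hc2 : Continuous fun s : ℝ => s • x := continuous_id.smul continuous_const
        simpa using hc2.tendsto 1
      have h2 : ∀ᶠ s in nhdsWithin (1:ℝ) (Ioi 1), s • x ∈ interior {x : (EuclideanSpace ℝ (Fin n)) | g x ≤ t} :=
        (hc.eventually_mem (isOpen_interior.mem_nhds hint)).filter_mono nhdsWithin_le_nhds
      obtain ⟨s, hsmem, hsgt⟩ := (h2.and eventually_mem_nhdsWithin).exists
      have hs1 : (1:ℝ) < s := hsgt
      have hle0 : s • x ∈ {x : (EuclideanSpace ℝ (Fin n)) | g x ≤ t} := interior_subset hsmem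
      have hle : g (s • x) ≤ t := hle0
      have hxt : g x = t := hx
      rw [hhom s (lt_trans one_pos hs1) x, hxt] at hle
      nlinarith [mul_pos (sub_pos.mpr hs1) ht]
    refine measure_mono_null hsubfr ?_
    rw [hsub_eq t ht]
    exact (hPconv.smul t).addHaar_frontier volume
  have hvol : ∀ t : ℝ, 0 < t →
      volume {x : (EuclideanSpace ℝ (Fin n)) | g x < t} = ENNReal.ofReal (t ^ n) * volume P := by
    intro t ht
    have h1 : volume {x : (EuclideanSpace ℝ (Fin n)) | g x < t} = volume {x : (EuclideanSpace ℝ (Fin n)) | g x ≤ t} := by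
      refine le_antisymm (measure_mono fun x hx => le_of_lt (show g x < t from hx)) ?_
      have hsplit : {x : (EuclideanSpace ℝ (Fin n)) | g x ≤ t} ⊆ {x : (EuclideanSpace ℝ (Fin n)) | g x < t} ∪ {x : (EuclideanSpace ℝ (Fin n)) | g x = t} := by
        intro x hx
        rcases lt_or_eq_of_le (show g x ≤ t from hx) with h | h
        · exact Or.inl h
        · exact Or.inr h
      calc volume {x : (EuclideanSpace ℝ (Fin n)) | g x ≤ t} ≤ volume ({x : (EuclideanSpace ℝ (Fin n)) | g x < t} ∪ {x : (EuclideanSpace ℝ (Fin n)) | g x = t}) :=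
            measure_mono hsplit
        _ ≤ volume {x : (EuclideanSpace ℝ (Fin n)) | g x < t} + volume {x : (EuclideanSpace ℝ (Fin n)) | g x = t} := measure_union_le _ _
        _ = volume {x : (EuclideanSpace ℝ (Fin n)) | g x < t} := by rw [hfr t ht, add_zero]
    rw [h1, hsub_eq t ht, Measure.addHaar_smul_of_nonneg volume ht.le,
      finrank_euclideanSpace_fin]
  -- the layer cake computation
  have hexp : ∀ a : ℝ, (∫⁻ t in Ioi a, ENNReal.ofReal (Real.exp (-t))) =
      ENNReal.ofReal (Real.exp (-a)) := by
    intro a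
    rw [← ofReal_integral_eq_lintegral_ofReal]
    · rw [integral_exp_neg_Ioi]
    · exact (by simpa using exp_neg_integrableOn_Ioi a one_pos : IntegrableOn (fun x => Real.exp (-x)) (Ioi a))
    · exact Filter.Eventually.of_forall fun t => (Real.exp_pos _).le
  have hmeas_lt : ∀ t : ℝ, MeasurableSet {x : (EuclideanSpace ℝ (Fin n)) | g x < t} := fun t =>
    (isOpen_lt hgc continuous_const).measurableSet
  have main : (∫⁻ x, ENNReal.ofReal (Real.exp (-(g x)))) =
      ∫⁻ t in Ioi (0:ℝ), ENNReal.ofReal (Real.exp (-t)) * volume {x : (EuclideanSpace ℝ (Fin n)) | g x < t} := by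
    have h1 : ∀ x : (EuclideanSpace ℝ (Fin n)), ENNReal.ofReal (Real.exp (-(g x))) =
        ∫⁻ t, (Ioi (g x)).indicator (fun t => ENNReal.ofReal (Real.exp (-t))) t := by
      intro x
      rw [lintegral_indicator measurableSet_Ioi, hexp (g x)]
    calc (∫⁻ x, ENNReal.ofReal (Real.exp (-(g x))))
        = ∫⁻ x, ∫⁻ t, (Ioi (g x)).indicator (fun t => ENNReal.ofReal (Real.exp (-t))) t :=
          lintegral_congr h1
      _ = ∫⁻ t, ∫⁻ x, (Ioi (g x)).indicator (fun t => ENNReal.ofReal (Real.exp (-t))) t := by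
          refine lintegral_lintegral_swap ?_
          have heq : (fun z : (EuclideanSpace ℝ (Fin n)) × ℝ =>
              (Ioi (g z.1)).indicator (fun t => ENNReal.ofReal (Real.exp (-t))) z.2) =
              fun z : (EuclideanSpace ℝ (Fin n)) × ℝ => ({q : (EuclideanSpace ℝ (Fin n)) × ℝ | g q.1 < q.2}).indicator
                (fun q => ENNReal.ofReal (Real.exp (-q.2))) z := by
            ext z
            by_cases hz : g z.1 < z.2 <;>
              simp [Set.indicator_apply, hz]
          rw [Function.uncurry_def]
          rw [heq]
          refine (Measurable.indicator ?_ ?_).aemeasurable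
          · exact (ENNReal.measurable_ofReal.comp
              ((Real.continuous_exp.comp continuous_neg).comp continuous_snd).measurable)
          · exact (isOpen_lt (hgc.comp continuous_fst) continuous_snd).measurableSet
      _ = ∫⁻ t, ENNReal.ofReal (Real.exp (-t)) * volume {x : (EuclideanSpace ℝ (Fin n)) | g x < t} := by
          refine lintegral_congr fun t => ?_
          rw [← lintegral_indicator_const (hmeas_lt t)]
          refine lintegral_congr fun x => ?_
          by_cases hx : g x < t <;> simp [Set.indicator_apply, hx]
      _ = ∫⁻ t in Ioi (0:ℝ), ENNReal.ofReal (Real.exp (-t)) * volume {x : (EuclideanSpace ℝ (Fin n)) | g x < t} := by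
          rw [← lintegral_indicator measurableSet_Ioi]
          refine lintegral_congr fun t => ?_
          by_cases ht : 0 < t
          · rw [Set.indicator_of_mem (show t ∈ Ioi (0:ℝ) from ht)]
          · rw [Set.indicator_of_notMem (show t ∉ Ioi (0:ℝ) from ht)]
            have hempty : {x : (EuclideanSpace ℝ (Fin n)) | g x < t} = ∅ := by
              ext x
              simp only [mem_setOf_eq, mem_empty_iff_false, iff_false, not_lt]
              exact le_trans (not_lt.mp ht) (hg0 x)
            rw [hempty, measure_empty, mul_zero]
  -- evaluate the one-dimensional integral
  have hgamma : (∫⁻ t in Ioi (0:ℝ), ENNReal.ofReal (Real.exp (-t)) * volume {x : (EuclideanSpace ℝ (Fin n)) | g x < t}) =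
      ENNReal.ofReal (n.factorial : ℝ) * volume P := by
    have step1 : (∫⁻ t in Ioi (0:ℝ), ENNReal.ofReal (Real.exp (-t)) * volume {x : (EuclideanSpace ℝ (Fin n)) | g x < t}) =
        ∫⁻ t in Ioi (0:ℝ), ENNReal.ofReal (Real.exp (-t) * t ^ n) * volume P := by
      refine setLIntegral_congr_fun measurableSet_Ioi (fun t ht => ?_)
      rw [hvol t ht, ← mul_assoc, ← ENNReal.ofReal_mul (Real.exp_pos _).le]
    rw [step1, lintegral_mul_const' (volume P) _ hPfin]
    congr 1
    rw [← ofReal_integral_eq_lintegral_ofReal]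
    · congr 1
      have h := Real.Gamma_eq_integral (s := (n:ℝ) + 1) (by positivity)
      rw [Real.Gamma_nat_eq_factorial] at h
      rw [h]
      refine setIntegral_congr_fun measurableSet_Ioi fun x hx => ?_
      simp only [add_sub_cancel_right, Real.rpow_natCast]
    · refine (Real.GammaIntegral_convergent (s := (n:ℝ)+1) (by positivity)).congr_fun
        ?_ measurableSet_Ioi
      intro x hx
      simp only [add_sub_cancel_right, Real.rpow_natCast]
    · refine (ae_restrict_iff' measurableSet_Ioi).mpr
        (Filter.Eventually.of_forall fun t ht => ?_)
      have ht' : (0:ℝ) < t := ht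
      positivity
  -- assemble
  have hint : (∫ x, Real.exp (-(g x))) = (∫⁻ x, ENNReal.ofReal (Real.exp (-(g x)))).toReal := by
    rw [integral_eq_lintegral_of_nonneg_ae]
    · exact Filter.Eventually.of_forall fun x => (Real.exp_pos _).le
    · exact (Real.continuous_exp.comp hgc.neg).aestronglyMeasurable
  calc (∫ x, Real.exp (-(⨆ y ∈ K, ⟪x, y⟫))) = ∫ x, Real.exp (-(g x)) := rfl
    _ = (∫⁻ x, ENNReal.ofReal (Real.exp (-(g x)))).toReal := hint
    _ = (ENNReal.ofReal (n.factorial : ℝ) * volume P).toReal := by rw [main, hgamma]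
    _ = (n.factorial : ℝ) * (volume P).toReal := by
        rw [ENNReal.toReal_mul, ENNReal.toReal_ofReal (by positivity)]
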